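/- Every Killing field η_a commutes with every invariant field ξ_b: for all a, b ∈ {1,2,3,4}, the Lie bracket [η_a, ξ_b] vanishes identically on ℝ⁴. -/

import Mathlib

/-- Partial derivative `∂f/∂xⁱ` of a real-valued function on `ℝ⁴`. -/
noncomputable def pd (i : Fin 4) (f : (Fin 4 → ℝ) → ℝ) (x : Fin 4 → ℝ) : ℝ :=
  fderiv ℝ f x (Pi.single i 1)
/-- The Killing vector fields `η₁,…,η₄` (indices `0,…,3`). -/
noncomputable def η (k : ℝ) (a : Fin 4) (x : Fin 4 → ℝ) : Fin 4 → ℝ :=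
  ![![1, 0, 0, 0],
    ![0, 0, 0, 1],
    ![k * x 3, 0, 1, 0],
    ![-2, 1, k / 2 * x 2, -(k / 2) * x 3]] a
/-- The invariant vector fields `ξ₁,…,ξ₄` (indices `0,…,3`). -/
noncomputable def ξ (k : ℝ) (i : Fin 4) (x : Fin 4 → ℝ) : Fin 4 → ℝ :=
  ![![-1, 0, 0, 0],
    ![-k * x 2 * Real.exp (-(k * x 1) / 2), 0, 0, -Real.exp (-(k * x 1) / 2)],
    ![0, 0, -Real.exp (k * x 1 / 2), 0],
    ![2, -1, 0, 0]] i
/-- The Lie bracket of vector fields on `ℝ⁴`: `[X,Y]^i = Σ_j (X^j ∂_j Y^i − Y^j ∂_j X^i)`. -/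
noncomputable def lieBracket (X Y : (Fin 4 → ℝ) → Fin 4 → ℝ) (x : Fin 4 → ℝ) (i : Fin 4) : ℝ :=
  ∑ j : Fin 4, (X x j * pd j (fun y => Y y i) x - Y x j * pd j (fun y => X y i) x)


lemma hcoord (m : Fin 4) (x : Fin 4 → ℝ) :
    HasFDerivAt (fun y : Fin 4 → ℝ => y m)
      (ContinuousLinearMap.proj (R := ℝ) (φ := fun _ : Fin 4 => ℝ) m) x :=
  (ContinuousLinearMap.proj (R := ℝ) (φ := fun _ : Fin 4 => ℝ) m).hasFDerivAt

lemma pd_const (j : Fin 4) (c : ℝ) (x : Fin 4 → ℝ) : pd j (fun _ => c) x = 0 := by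
  simp [pd]

lemma pd_smul_coord (c : ℝ) (m j : Fin 4) (x : Fin 4 → ℝ) :
    pd j (fun y => c * y m) x = c * (Pi.single j (1:ℝ) : Fin 4 → ℝ) m := by
  have h := (hcoord m x).const_mul c
  rw [pd, h.fderiv]; simp

lemma pd_neg_exp_neg (k : ℝ) (j : Fin 4) (x : Fin 4 → ℝ) :
    pd j (fun y => -Real.exp (-(k * y 1) / 2)) x
      = Real.exp (-(k * x 1) / 2) * (k * (Pi.single j (1:ℝ) : Fin 4 → ℝ) 1) / 2 := by
  have h := (((hcoord 1 x).const_mul k).neg.mul_const (2:ℝ)⁻¹).exp.neg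
  simp only [div_eq_mul_inv] at *
  erw [pd, h.fderiv]; simp; ring

lemma pd_neg_exp_pos (k : ℝ) (j : Fin 4) (x : Fin 4 → ℝ) :
    pd j (fun y => -Real.exp (k * y 1 / 2)) x
      = -(Real.exp (k * x 1 / 2) * (k * (Pi.single j (1:ℝ) : Fin 4 → ℝ) 1) / 2) := by
  have h := (((hcoord 1 x).const_mul k).mul_const (2:ℝ)⁻¹).exp.neg
  simp only [div_eq_mul_inv] at *
  erw [pd, h.fderiv]; simp; ring

lemma pd_prod (k : ℝ) (j : Fin 4) (x : Fin 4 → ℝ) :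
    pd j (fun y => -k * y 2 * Real.exp (-(k * y 1) / 2)) x
      = -k * (Pi.single j (1:ℝ) : Fin 4 → ℝ) 2 * Real.exp (-(k * x 1) / 2)
        + (-k * x 2) * (Real.exp (-(k * x 1) / 2) * (-(k * (Pi.single j (1:ℝ) : Fin 4 → ℝ) 1)) / 2) := by
  have h := ((hcoord 2 x).const_mul (-k)).mul (((hcoord 1 x).const_mul k).neg.mul_const (2:ℝ)⁻¹).exp
  simp only [div_eq_mul_inv] at *
  erw [pd, h.fderiv]; simp; ring

lemma pd_neg_smul_coord (c : ℝ) (m j : Fin 4) (x : Fin 4 → ℝ) :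
    pd j (fun y => -(c * y m)) x = -(c * (Pi.single j (1:ℝ) : Fin 4 → ℝ) m) := by
  have h := ((hcoord m x).const_mul c).neg
  erw [pd, h.fderiv]; simp

lemma pd_prod' (k : ℝ) (j : Fin 4) (x : Fin 4 → ℝ) :
    pd j (fun y => -(k * y 2 * Real.exp (-(k * y 1) / 2))) x
      = -(k * (Pi.single j (1:ℝ) : Fin 4 → ℝ) 2 * Real.exp (-(k * x 1) / 2)
        + (k * x 2) * (Real.exp (-(k * x 1) / 2) * (-(k * (Pi.single j (1:ℝ) : Fin 4 → ℝ) 1)) / 2)) := by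
  have h := (((hcoord 2 x).const_mul k).mul (((hcoord 1 x).const_mul k).neg.mul_const (2:ℝ)⁻¹).exp).neg
  simp only [div_eq_mul_inv] at *
  erw [pd, h.fderiv]; simp; ring

set_option maxHeartbeats 4000000 in
/-- Every Killing field `η_a` commutes with every invariant field `ξ_b`:
`[η_a, ξ_b] = 0` identically on `ℝ⁴`. -/
theorem eta_xi_commute (k : ℝ) (hk : 0 < k) (a b : Fin 4) (x : Fin 4 → ℝ) (i : Fin 4) :
    lieBracket (η k a) (ξ k b) x i = 0 := by
  fin_cases a <;> fin_cases b <;> fin_cases i <;>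
    simp [lieBracket, η, ξ, Fin.sum_univ_four, Matrix.vecHead, Matrix.vecTail,
      pd_const, pd_smul_coord, pd_neg_smul_coord, pd_neg_exp_neg, pd_neg_exp_pos,
      pd_prod, pd_prod', Pi.single_apply] <;> ring_nf
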